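/- arXiv:1807.08997 — 4 statements merged into one kernel-verified Lean document; each statement's English description precedes it below -/
import Mathlib

section
/- Let α > 1/2, let a(x) = c_α (1+|x|²)^{-α} with c_α > 0 the constant making ∫_ℝ a = 1, and let u₀ ∈ L^∞_+(ℝ). Then there exist R > 0 and constants c₁, c₂ > 0 such that for all |x| ≥ R: c₁ |x|^{−2α} ≤ a(x) ≤ c₂ (a*u₀)(x). -/
open MeasureTheory Real Set

/-- two-sided tail comparison `|x|^{-2α} ≼ a(x) ≼ (a*u₀)(x)`
for large `|x|`, for `u₀ ∈ L^∞_+(ℝ)`. -/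
theorem stmt_6
    (α cα : ℝ) (hα : 1 / 2 < α) (hcα : 0 < cα)
    (a : ℝ → ℝ) (ha : ∀ x : ℝ, a x = cα * (1 + |x| ^ 2) ^ (-α))
    (hnorm : ∫ x : ℝ, a x = 1)
    (u₀ : ℝ → ℝ) (hu₀L : MemLp u₀ ⊤ (volume : Measure ℝ))
    (hu₀nn : ∀ᵐ x : ℝ ∂volume, 0 ≤ u₀ x)
    (δ x₀ : ℝ) (hδ : 0 < δ)
    (hu₀low : ∀ᵐ x : ℝ ∂volume, x ∈ Icc (x₀ - δ) (x₀ + δ) → δ ≤ u₀ x) :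
    ∃ R > (0 : ℝ), ∃ c₁ > (0 : ℝ), ∃ c₂ > (0 : ℝ), ∀ x : ℝ, R ≤ |x| →
      c₁ * |x| ^ (-(2 * α)) ≤ a x ∧ a x ≤ c₂ * ∫ y : ℝ, a (x - y) * u₀ y := by
  have hapos : ∀ z : ℝ, 0 < a z := by
    intro z
    rw [ha]
    have h1 : (0:ℝ) < 1 + |z| ^ 2 := by positivity
    exact mul_pos hcα (Real.rpow_pos_of_pos h1 _)
  have haInt : Integrable a (volume : Measure ℝ) := by
    by_contra h
    rw [integral_undef h] at hnorm
    norm_num at hnorm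
  set M : ℝ := |x₀| + δ with hM
  have hMpos : 0 < M := by positivity
  refine ⟨max 1 M, lt_of_lt_of_le one_pos (le_max_left _ _),
    cα * 2 ^ (-α), by positivity, (4:ℝ) ^ α / (2 * δ ^ 2), by positivity, ?_⟩
  intro x hx
  have h1x : (1:ℝ) ≤ |x| := le_trans (le_max_left _ _) hx
  have hMx : M ≤ |x| := le_trans (le_max_right _ _) hx
  have hxpos : (0:ℝ) < |x| := lt_of_lt_of_le one_pos h1x
  constructor
  · -- lower bound
    have hbase : 1 + |x| ^ 2 ≤ 2 * |x| ^ 2 := by nlinarith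
    have h2 : ((2:ℝ) * |x| ^ 2) ^ (-α) ≤ (1 + |x| ^ 2) ^ (-α) :=
      Real.rpow_le_rpow_of_nonpos (by positivity) hbase (by linarith)
    have h3 : ((2:ℝ) * |x| ^ 2) ^ (-α) = 2 ^ (-α) * (|x| ^ 2) ^ (-α) :=
      Real.mul_rpow (by norm_num) (by positivity)
    have h4 : ((|x| : ℝ) ^ 2) ^ (-α) = |x| ^ (-(2 * α)) := by
      rw [← Real.rpow_natCast |x| 2, ← Real.rpow_mul (abs_nonneg x)]
      norm_num
    rw [ha]
    calc cα * 2 ^ (-α) * |x| ^ (-(2 * α)) = cα * ((2:ℝ) * |x| ^ 2) ^ (-α) := by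
          rw [h3, h4]; ring
      _ ≤ cα * (1 + |x| ^ 2) ^ (-α) := by
          exact mul_le_mul_of_nonneg_left h2 hcα.le
  · -- upper bound
    set c : ℝ := cα * (1 + (|x| + M) ^ 2) ^ (-α) with hc
    have hcpos : 0 < c := by
      have : (0:ℝ) < 1 + (|x| + M) ^ 2 := by positivity
      exact mul_pos hcα (Real.rpow_pos_of_pos this _)
    -- pointwise lower bound on a (x - y) for y in the interval
    have hkey : ∀ y ∈ Icc (x₀ - δ) (x₀ + δ), c ≤ a (x - y) := by
      intro y hy
      have hyb : |y| ≤ M := by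
        rw [abs_le]
        exact ⟨by linarith [hy.1, neg_abs_le x₀], by linarith [hy.2, le_abs_self x₀]⟩
      have hxy : |x - y| ≤ |x| + M := le_trans (abs_sub (x) (y)) (by linarith)
      have hbase : 1 + |x - y| ^ 2 ≤ 1 + (|x| + M) ^ 2 := by
        have h0 : (0:ℝ) ≤ |x - y| := abs_nonneg _
        nlinarith
      have := Real.rpow_le_rpow_of_nonpos (by positivity) hbase (by linarith : -α ≤ 0)
      rw [ha]
      exact mul_le_mul_of_nonneg_left this hcα.le
    -- integrability of the integrand
    have haIntx : Integrable (fun y => a (x - y)) (volume : Measure ℝ) :=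
      (integrable_comp_sub_left a x).mpr haInt
    have hbdd : ∀ᵐ y : ℝ ∂(volume : Measure ℝ),
        ‖u₀ y‖ ≤ (eLpNormEssSup u₀ volume).toReal := by
      have hlt : eLpNormEssSup u₀ volume < ⊤ := by
        have := hu₀L.2
        simpa [eLpNorm_exponent_top] using this
      filter_upwards [ae_le_eLpNormEssSup (f := u₀) (μ := volume)] with y hy
      have h2 := ENNReal.toReal_mono hlt.ne hy
      simpa using h2
    have hprod : Integrable (fun y => a (x - y) * u₀ y) (volume : Measure ℝ) := by
      have := Integrable.bdd_mul (f := u₀) (g := fun y => a (x - y))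
        haIntx hu₀L.aestronglyMeasurable hbdd
      simpa [mul_comm] using this
    have hnnI : 0 ≤ᵐ[volume] fun y => a (x - y) * u₀ y := by
      filter_upwards [hu₀nn] with y hy
      exact mul_nonneg (hapos _).le hy
    -- lower bound the integral
    have hstep1 : ∫ y in Icc (x₀ - δ) (x₀ + δ), a (x - y) * u₀ y
        ≤ ∫ y : ℝ, a (x - y) * u₀ y :=
      setIntegral_le_integral hprod hnnI
    have hstep2 : ∫ y in Icc (x₀ - δ) (x₀ + δ), (c * δ)
        ≤ ∫ y in Icc (x₀ - δ) (x₀ + δ), a (x - y) * u₀ y := by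
      refine setIntegral_mono_on_ae ((integrableOn_const_iff enorm_ne_top).mpr (Or.inr ?_))
        (hprod.integrableOn) measurableSet_Icc ?_
      · rw [Real.volume_Icc]; exact ENNReal.ofReal_lt_top
      · filter_upwards [hu₀low] with y hy hmem
        have h1 := hkey y hmem
        have h2 := hy hmem
        exact mul_le_mul h1 h2 hδ.le (hapos _).le
    have hconst : ∫ y in Icc (x₀ - δ) (x₀ + δ), (c * δ) = (2 * δ) * (c * δ) := by
      rw [setIntegral_const, Real.volume_real_Icc, show x₀ + δ - (x₀ - δ) = 2 * δ by ring,
        max_eq_left (by linarith), smul_eq_mul]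
    have hI : 2 * δ ^ 2 * c ≤ ∫ y : ℝ, a (x - y) * u₀ y := by
      have := le_trans hstep2 hstep1
      rw [hconst] at this
      nlinarith [this]
    -- a x ≤ 4^α * c
    have hax : a x ≤ (4:ℝ) ^ α * c := by
      have hbase : 1 + (|x| + M) ^ 2 ≤ 4 * (1 + |x| ^ 2) := by nlinarith
      have h2 : ((4:ℝ) * (1 + |x| ^ 2)) ^ (-α) ≤ (1 + (|x| + M) ^ 2) ^ (-α) :=
        Real.rpow_le_rpow_of_nonpos (by positivity) hbase (by linarith)
      have h3 : ((4:ℝ) * (1 + |x| ^ 2)) ^ (-α) = 4 ^ (-α) * (1 + |x| ^ 2) ^ (-α) :=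
        Real.mul_rpow (by norm_num) (by positivity)
      have h4 : (4:ℝ) ^ α * (4:ℝ) ^ (-α) = 1 := by
        rw [← Real.rpow_add (by norm_num)]
        simp
      rw [ha, hc]
      calc cα * (1 + |x| ^ 2) ^ (-α)
          = (4:ℝ) ^ α * (cα * (4 ^ (-α) * (1 + |x| ^ 2) ^ (-α))) := by
            rw [← mul_assoc, ← mul_assoc]
            rw [show (4:ℝ) ^ α * cα * 4 ^ (-α) = cα * ((4:ℝ) ^ α * 4 ^ (-α)) by ring,
              h4, mul_one]
        _ = (4:ℝ) ^ α * (cα * ((4 * (1 + |x| ^ 2)) ^ (-α))) := by rw [h3]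
        _ ≤ (4:ℝ) ^ α * (cα * (1 + (|x| + M) ^ 2) ^ (-α)) := by
            have h4p : (0:ℝ) < (4:ℝ) ^ α := Real.rpow_pos_of_pos (by norm_num) _
            exact mul_le_mul_of_nonneg_left
              (mul_le_mul_of_nonneg_left h2 hcα.le) h4p.le
    -- combine
    have h4p : (0:ℝ) < (4:ℝ) ^ α := Real.rpow_pos_of_pos (by norm_num) _
    have hδ2 : (0:ℝ) < 2 * δ ^ 2 := by positivity
    calc a x ≤ (4:ℝ) ^ α * c := hax
      _ = (4:ℝ) ^ α / (2 * δ ^ 2) * (2 * δ ^ 2 * c) := by field_simp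
      _ ≤ (4:ℝ) ^ α / (2 * δ ^ 2) * ∫ y : ℝ, a (x - y) * u₀ y :=
          mul_le_mul_of_nonneg_left hI (by positivity)
end

section
/- Let α > 1/2, let a(x) = c_α (1+|x|²)^{-α} with c_α > 0 the constant making ∫_ℝ a = 1, let ε ∈ (0,1), and define g(x,t) = min{1, |x|^{−2α} e^{(1−ε)t}} and G(x,t,l) = (1/l)∫_t^{t+l} g(x,s) ds for l > 0. Then there exists τ₀ = τ₀(ε) > 0 such that for all l > 0, all x ∈ ℝ, and all t ≥ τ₀: ∂G/∂t(x,t,l) ≤ (a*G)(x,t,l), where the convolution is in the x variable; i.e., G(·,·,l) is a subsolution to ∂u/∂t = a*u on [τ₀,∞). -/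
open MeasureTheory Real Set Filter Topology

section helpers

open intervalIntegral in
theorem L6 (f : ℝ → ℝ) (hf : Continuous f) (l t : ℝ) :
    HasDerivAt (fun s => (1/l) * ∫ u in s..(s+l), f u) ((1/l) * (f (t+l) - f t)) t := by
  have key : ∀ s : ℝ, ∫ u in s..(s+l), f u = (∫ u in (0:ℝ)..(s+l), f u) - ∫ u in (0:ℝ)..s, f u := by
    intro s
    rw [eq_sub_iff_add_eq]
    rw [add_comm]
    exact integral_add_adjacent_intervals (hf.intervalIntegrable _ _) (hf.intervalIntegrable _ _)
  have h1 : HasDerivAt (fun s : ℝ => ∫ u in (0:ℝ)..(s+l), f u) (f (t+l)) t := by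
    have := ((hf.integral_hasStrictDerivAt 0 (t+l)).hasDerivAt.comp t
      ((hasDerivAt_id t).add_const l))
    simpa [Function.comp_def] using this
  have h2 : HasDerivAt (fun s : ℝ => ∫ u in (0:ℝ)..s, f u) (f t) t :=
    (hf.integral_hasStrictDerivAt 0 t).hasDerivAt
  have h3 := (h1.sub h2).const_mul (1/l)
  refine h3.congr_of_eventuallyEq (Eventually.of_forall fun s => ?_)
  simp only []
  rw [key s]; rfl

theorem Lcont (c k : ℝ) : Continuous (fun s : ℝ => min 1 (c * Real.exp (k*s))) := by
  exact continuous_const.min (continuous_const.mul (Real.continuous_exp.comp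
    (continuous_const.mul continuous_id)))

open intervalIntegral in
theorem Lexp (c k : ℝ) (u v : ℝ) (huv : u ≤ v) :
    ∫ s in u..v, k * (c * Real.exp (k*s)) = c * Real.exp (k*v) - c * Real.exp (k*u) := by
  have hd : ∀ s : ℝ, HasDerivAt (fun s => c * Real.exp (k*s)) (k * (c * Real.exp (k*s))) s := by
    intro s
    have h1 : HasDerivAt (fun s : ℝ => k * s) k s := by
      simpa using (hasDerivAt_id s).const_mul k
    have h2 := (Real.hasDerivAt_exp (k*s)).comp s h1
    have h3 := h2.const_mul c
    exact h3.congr_deriv (by ring)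
  rw [integral_eq_sub_of_hasDerivAt (fun s _ => hd s)]
  exact (continuous_const.mul (continuous_const.mul (Real.continuous_exp.comp
    (continuous_const.mul continuous_id)))).intervalIntegrable u v

open intervalIntegral in
theorem L5 (c k t l : ℝ) (hc : 0 ≤ c) (hk : 0 < k) (hl : 0 < l) :
    min 1 (c * Real.exp (k*(t+l))) - min 1 (c * Real.exp (k*t)) ≤
      k * ∫ s in t..(t+l), min 1 (c * Real.exp (k*s)) := by
  set f : ℝ → ℝ := fun s => min 1 (c * Real.exp (k*s)) with hf
  have hfc : Continuous f := Lcont c k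
  have hfnn : ∀ s, 0 ≤ f s := fun s => le_min zero_le_one (by positivity)
  have hmono : ∀ u v : ℝ, u ≤ v → c * Real.exp (k*u) ≤ c * Real.exp (k*v) := by
    intro u v huv
    exact mul_le_mul_of_nonneg_left (Real.exp_le_exp.2 (by nlinarith)) hc
  by_cases h1 : 1 ≤ c * Real.exp (k*t)
  · have e1 : f (t+l) = 1 := min_eq_left (le_trans h1 (hmono t (t+l) (by linarith)))
    have e2 : f t = 1 := min_eq_left h1
    have : 0 ≤ ∫ s in t..(t+l), f s :=
      integral_nonneg (by linarith) (fun s _ => hfnn s)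
    show f (t+l) - f t ≤ k * ∫ s in t..(t+l), f s
    rw [e1, e2]; simp; positivity
  · push_neg at h1
    by_cases h2 : c * Real.exp (k*(t+l)) ≤ 1
    · have key : ∫ s in t..(t+l), f s = ∫ s in t..(t+l), c * Real.exp (k*s) := by
        apply integral_congr
        intro s hs
        rw [uIcc_of_le (by linarith)] at hs
        exact min_eq_right (le_trans (hmono s (t+l) hs.2) h2)
      show f (t+l) - f t ≤ k * ∫ s in t..(t+l), f s
      rw [key, ← intervalIntegral.integral_const_mul, Lexp c k t (t+l) (by linarith)]
      have : f (t+l) = c * Real.exp (k*(t+l)) := min_eq_right h2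
      have ht : f t = c * Real.exp (k*t) := min_eq_right h1.le
      rw [this, ht]
    · push_neg at h2
      have hcpos : 0 < c := by
        rcases lt_or_eq_of_le hc with h | h
        · exact h
        · exfalso; rw [← h] at h2; simp at h2; linarith
      set ts : ℝ := Real.log (1/c) / k with hts
      have hexp : c * Real.exp (k * ts) = 1 := by
        rw [hts, mul_div_cancel₀ _ (ne_of_gt hk), Real.exp_log (by positivity)]
        field_simp
      have htlt : t < ts := by
        by_contra hcon
        push_neg at hcon
        have := hmono ts t hcon
        rw [hexp] at this; linarith
      have htgt : ts < t + l := by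
        by_contra hcon
        push_neg at hcon
        have := hmono (t+l) ts hcon
        rw [hexp] at this; linarith
      have key : ∫ s in t..ts, f s = ∫ s in t..ts, c * Real.exp (k*s) := by
        apply integral_congr
        intro s hs
        rw [uIcc_of_le htlt.le] at hs
        refine min_eq_right ?_
        calc c * Real.exp (k*s) ≤ c * Real.exp (k*ts) := hmono s ts hs.2
          _ = 1 := hexp
      have split : ∫ s in t..(t+l), f s = (∫ s in t..ts, f s) + ∫ s in ts..(t+l), f s :=
        (integral_add_adjacent_intervals (hfc.intervalIntegrable _ _)
          (hfc.intervalIntegrable _ _)).symm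
      have hnn2 : 0 ≤ ∫ s in ts..(t+l), f s :=
        integral_nonneg htgt.le (fun s _ => hfnn s)
      have e1 : f (t+l) = 1 := min_eq_left h2.le
      have ht : f t = c * Real.exp (k*t) := min_eq_right h1.le
      have calc1 : k * ∫ s in t..ts, f s = 1 - c * Real.exp (k*t) := by
        rw [key, ← intervalIntegral.integral_const_mul, Lexp c k t ts htlt.le, hexp]
      show f (t+l) - f t ≤ k * ∫ s in t..(t+l), f s
      rw [e1, ht, split, mul_add, calc1]
      nlinarith

theorem L7 (α cα : ℝ) (hα : 1 / 2 < α) (hcα : 0 < cα)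
    (a : ℝ → ℝ) (ha : ∀ x : ℝ, a x = cα * (1 + |x| ^ 2) ^ (-α))
    (hInt : Integrable a) (hnorm : ∫ x : ℝ, a x = 1)
    (ε : ℝ) (hε : ε ∈ Ioo (0 : ℝ) 1)
    (g : ℝ → ℝ → ℝ)
    (hg : ∀ x t : ℝ, g x t = min 1 (|x| ^ (-(2 * α)) * Real.exp ((1 - ε) * t))) :
    ∃ τ₀ > (0:ℝ), ∀ t, τ₀ ≤ t → ∀ x,
      (1 - ε) * g x t ≤ ∫ y : ℝ, a (x - y) * g y t := by
  obtain ⟨hε0, hε1⟩ := hε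
  have hα0 : (0:ℝ) < α := by linarith
  have hapos : ∀ z, 0 < a z := fun z => by rw [ha]; positivity
  have hacont : Continuous a := by
    have : Continuous fun x : ℝ => cα * (1 + |x| ^ 2) ^ (-α) := by
      apply continuous_const.mul
      apply Continuous.rpow_const (by continuity)
      intro x; left; positivity
    exact this.congr fun x => (ha x).symm
  have hg0 : ∀ y t, 0 ≤ g y t := fun y t => by rw [hg]; exact le_min zero_le_one (by positivity)
  have hg1 : ∀ y t, g y t ≤ 1 := fun y t => by rw [hg]; exact min_le_left _ _
  -- choose R
  obtain ⟨R, hR1, hRint⟩ : ∃ R : ℝ, 1 ≤ R ∧ 1 - ε/2 ≤ ∫ z in Ioc (-R) R, a z := by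
    have hmono : Monotone (fun n : ℕ => Ioc (-(n:ℝ)) n) := by
      intro m n hmn
      have : (m:ℝ) ≤ n := Nat.cast_le.2 hmn
      apply Ioc_subset_Ioc <;> linarith
    have hunion : (⋃ n : ℕ, Ioc (-(n:ℝ)) n) = univ := by
      ext x
      simp only [mem_iUnion, mem_univ, iff_true, mem_Ioc]
      obtain ⟨n, hn⟩ := exists_nat_gt |x|
      exact ⟨n, by cases abs_lt.1 hn; constructor <;> linarith⟩
    have htend := tendsto_setIntegral_of_monotone (fun n : ℕ => measurableSet_Ioc) hmono
      (by rw [hunion]; exact hInt.integrableOn)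
    rw [hunion, setIntegral_univ, hnorm] at htend
    have hev : ∀ᶠ n : ℕ in atTop, 1 - ε/2 ≤ ∫ z in Ioc (-(n:ℝ)) n, a z :=
      htend.eventually (eventually_ge_nhds (by linarith))
    obtain ⟨n, hn1, hn2⟩ := (hev.and (eventually_ge_atTop 1)).exists
    exact ⟨n, by exact_mod_cast Nat.one_le_cast.2 hn2, hn1⟩
  -- choose M
  obtain ⟨M, hMR, hM1, hMrat⟩ : ∃ M : ℝ, R ≤ M ∧ 1 ≤ M ∧
      (1 - ε)/(1 - ε/2) ≤ (M/(M+R)) ^ (2*α) := by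
    have h1 : Tendsto (fun M : ℝ => M/(M+R)) atTop (𝓝 1) := by
      have h0 : Tendsto (fun M : ℝ => R/(M+R)) atTop (𝓝 0) :=
        Tendsto.div_atTop tendsto_const_nhds (tendsto_atTop_add_const_right _ R tendsto_id)
      have h2 : Tendsto (fun M : ℝ => 1 - R/(M+R)) atTop (𝓝 1) := by
        simpa using tendsto_const_nhds.sub h0
      apply h2.congr'
      filter_upwards [eventually_gt_atTop (0:ℝ)] with M hM
      field_simp
      ring
    have h2 : Tendsto (fun M : ℝ => (M/(M+R)) ^ (2*α)) atTop (𝓝 1) := by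
      have hc : ContinuousAt (fun u : ℝ => u ^ (2*α)) 1 :=
        Real.continuousAt_rpow_const 1 (2*α) (Or.inl one_ne_zero)
      simpa [Real.one_rpow, Function.comp_def] using hc.tendsto.comp h1
    have hlt : (1 - ε)/(1 - ε/2) < 1 := by
      rw [div_lt_one (by linarith)]; linarith
    have hev := h2.eventually (eventually_ge_nhds hlt)
    obtain ⟨M, h3, h4, h5⟩ := (hev.and ((eventually_ge_atTop R).and (eventually_ge_atTop 1))).exists
    exact ⟨M, h4, h5, h3⟩
  have hMR0 : (0:ℝ) < M + R := by linarith
  refine ⟨max 1 (2*α * Real.log (M+R) / (1-ε)), lt_of_lt_of_le zero_lt_one (le_max_left _ _),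
    fun t ht x => ?_⟩
  set E : ℝ := Real.exp ((1-ε)*t) with hE
  have hEpos : 0 < E := Real.exp_pos _
  -- K1 : for large t, g = 1 on the ball of radius M+R
  have hEbig : (M+R) ^ (2*α) ≤ E := by
    rw [Real.rpow_def_of_pos hMR0, hE]
    apply Real.exp_le_exp.2
    have h1 : 2*α * Real.log (M+R) / (1-ε) ≤ t := le_trans (le_max_right _ _) ht
    rw [div_le_iff₀ (by linarith)] at h1
    nlinarith
  have K1 : ∀ y : ℝ, y ≠ 0 → |y| ≤ M + R → g y t = 1 := by
    intro y hy0 hyle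
    rw [hg]
    apply min_eq_left
    have hypos : 0 < |y| := abs_pos.2 hy0
    have h1 : |y| ^ (2*α) ≤ E :=
      le_trans (Real.rpow_le_rpow hypos.le hyle (by positivity)) hEbig
    have h2 : (0:ℝ) < |y| ^ (2*α) := Real.rpow_pos_of_pos hypos _
    rw [Real.rpow_neg (abs_nonneg y)]
    rw [inv_mul_eq_div, le_div_iff₀ h2, one_mul]
    exact h1
  -- integrability of the convolution integrand
  have hax : Integrable (fun y => a (x - y)) := (integrable_comp_sub_left a x).2 hInt
  have hgm : Measurable (fun y => g y t) := by
    simp only [hg]; fun_prop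
  have hi : Integrable (fun y => a (x - y) * g y t) := by
    have hsm : AEStronglyMeasurable (fun y => a (x - y) * g y t) volume := by
      apply AEStronglyMeasurable.mul _ hgm.aestronglyMeasurable
      exact (hacont.comp (continuous_const.sub continuous_id)).aestronglyMeasurable
    refine hax.mono' hsm ?_
    filter_upwards with y
    rw [Real.norm_eq_abs, abs_mul, abs_of_pos (hapos _), abs_of_nonneg (hg0 y t)]
    nth_rewrite 2 [← mul_one (a (x-y))]
    exact mul_le_mul_of_nonneg_left (hg1 y t) (hapos _).le
  have hsub : ∫ y in Ioc (x-R) (x+R), a (x - y) * g y t ≤ ∫ y, a (x - y) * g y t :=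
    setIntegral_le_integral hi (by filter_upwards with y; exact mul_nonneg (hapos _).le (hg0 y t))
  have htrans : ∫ y in Ioc (x-R) (x+R), a (x - y) = ∫ z in Ioc (-R) R, a z := by
    have h1 : ∫ y in (x-R)..(x+R), a (x - y) = ∫ z in (-R)..R, a z := by
      have heq : ∀ y, a (x - y) = a (y - x) := by
        intro y; rw [ha, ha, abs_sub_comm]
      simp_rw [heq]
      rw [intervalIntegral.integral_comp_sub_right (fun z => a z) x]
      norm_num
    rw [intervalIntegral.integral_of_le (by linarith),
      intervalIntegral.integral_of_le (by linarith)] at h1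
    exact h1
  have habs : ∀ y ∈ Ioc (x-R) (x+R), |y| ≤ |x| + R ∧ |x| - R ≤ |y| := by
    intro y hy
    obtain ⟨hy1, hy2⟩ := hy
    constructor
    · calc |y| = |x + (y - x)| := by ring_nf
        _ ≤ |x| + |y - x| := abs_add_le _ _
        _ ≤ |x| + R := by
            have : |y - x| ≤ R := abs_le.2 ⟨by linarith, by linarith⟩
            linarith
    · have h1 : |x| ≤ |y| + |x - y| := by
        calc |x| = |y + (x - y)| := by ring_nf
          _ ≤ |y| + |x - y| := abs_add_le _ _
      have : |x - y| ≤ R := abs_le.2 ⟨by linarith, by linarith⟩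
      linarith
  by_cases hx : |x| ≤ M
  · -- small x : g = 1 on the window
    have hcongr : ∫ y in Ioc (x-R) (x+R), a (x - y) * g y t
        = ∫ y in Ioc (x-R) (x+R), a (x - y) := by
      apply setIntegral_congr_ae measurableSet_Ioc
      have h0 : ∀ᵐ y : ℝ, y ≠ 0 := by
        rw [ae_iff]
        have : {y : ℝ | ¬ y ≠ 0} = {0} := by ext y; simp
        rw [this]
        exact measure_singleton 0
      filter_upwards [h0] with y hy0 hy
      rw [K1 y hy0 (le_trans (habs y hy).1 (by linarith)), mul_one]
    calc (1 - ε) * g x t ≤ (1 - ε) * 1 := by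
          apply mul_le_mul_of_nonneg_left (hg1 x t) (by linarith)
      _ ≤ 1 - ε/2 := by linarith
      _ ≤ ∫ z in Ioc (-R) R, a z := hRint
      _ = ∫ y in Ioc (x-R) (x+R), a (x - y) := htrans.symm
      _ = ∫ y in Ioc (x-R) (x+R), a (x - y) * g y t := hcongr.symm
      _ ≤ _ := hsub
  · -- large x
    push_neg at hx
    have hxpos : 0 < |x| := by linarith
    have hxR : 0 < |x| + R := by linarith
    set κ : ℝ := (|x|/(|x|+R)) ^ (2*α) with hκ
    have hκ0 : 0 ≤ κ := Real.rpow_nonneg (by positivity) _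
    have hκ1 : κ ≤ 1 :=
      Real.rpow_le_one (by positivity) ((div_le_one hxR).2 (by linarith)) (by positivity)
    have hκM : (M/(M+R)) ^ (2*α) ≤ κ := by
      apply Real.rpow_le_rpow (by positivity) _ (by positivity)
      rw [div_le_div_iff₀ hMR0 hxR]
      nlinarith
    have hpoint : ∀ y ∈ Ioc (x-R) (x+R),
        a (x - y) * (κ * g x t) ≤ a (x - y) * g y t := by
      intro y hy
      apply mul_le_mul_of_nonneg_left _ (hapos _).le
      obtain ⟨hyle, hyge⟩ := habs y hy
      have hypos : 0 < |y| := by linarith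
      have step1 : (|x|+R) ^ (-(2*α)) ≤ |y| ^ (-(2*α)) :=
        Real.rpow_le_rpow_of_nonpos hypos hyle (by linarith)
      have step2 : min 1 ((|x|+R) ^ (-(2*α)) * E) ≤ g y t := by
        rw [hg]
        exact min_le_min le_rfl (mul_le_mul_of_nonneg_right step1 hEpos.le)
      refine le_trans ?_ step2
      rw [hg]
      by_cases hcase : 1 ≤ (|x|+R) ^ (-(2*α)) * E
      · rw [min_eq_left hcase]
        exact mul_le_one₀ hκ1 (le_min zero_le_one (by positivity)) (min_le_left _ _)
      · push_neg at hcase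
        rw [min_eq_right hcase.le]
        have key : κ * (|x| ^ (-(2*α)) * E) = (|x|+R) ^ (-(2*α)) * E := by
          rw [hκ, Real.div_rpow hxpos.le hxR.le, Real.rpow_neg hxpos.le,
            Real.rpow_neg hxR.le]
          have h1 : |x| ^ (2*α) ≠ 0 := ne_of_gt (Real.rpow_pos_of_pos hxpos _)
          have h2 : (|x|+R) ^ (2*α) ≠ 0 := ne_of_gt (Real.rpow_pos_of_pos hxR _)
          field_simp
        calc κ * min 1 (|x| ^ (-(2*α)) * E) ≤ κ * (|x| ^ (-(2*α)) * E) :=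
              mul_le_mul_of_nonneg_left (min_le_right _ _) hκ0
          _ = (|x|+R) ^ (-(2*α)) * E := key
    have hmono2 : ∫ y in Ioc (x-R) (x+R), a (x - y) * (κ * g x t)
        ≤ ∫ y in Ioc (x-R) (x+R), a (x - y) * g y t := by
      apply setIntegral_mono_on ((hax.mul_const _).integrableOn) hi.integrableOn
        measurableSet_Ioc hpoint
    have hLHS : ∫ y in Ioc (x-R) (x+R), a (x - y) * (κ * g x t)
        = (∫ z in Ioc (-R) R, a z) * (κ * g x t) := by
      rw [integral_mul_const, htrans]
    have hfin : (1 - ε) * g x t ≤ (∫ z in Ioc (-R) R, a z) * (κ * g x t) := by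
      have h0 : (1 - ε)/(1 - ε/2) ≤ κ := le_trans hMrat hκM
      have h1 : 1 - ε ≤ κ * (1 - ε/2) := (div_le_iff₀ (by linarith)).1 h0
      have h2 : (0:ℝ) ≤ κ * g x t := mul_nonneg hκ0 (hg0 x t)
      have hstep : (1 - ε/2) * (κ * g x t) ≤ (∫ z in Ioc (-R) R, a z) * (κ * g x t) :=
        mul_le_mul_of_nonneg_right hRint h2
      have hstep2 : (1 - ε) * g x t ≤ (1 - ε/2) * (κ * g x t) := by
        calc (1 - ε) * g x t ≤ (κ * (1 - ε/2)) * g x t :=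
              mul_le_mul_of_nonneg_right h1 (hg0 x t)
          _ = (1 - ε/2) * (κ * g x t) := by ring
      linarith
    calc (1 - ε) * g x t ≤ (∫ z in Ioc (-R) R, a z) * (κ * g x t) := hfin
      _ = ∫ y in Ioc (x-R) (x+R), a (x - y) * (κ * g x t) := hLHS.symm
      _ ≤ ∫ y in Ioc (x-R) (x+R), a (x - y) * g y t := hmono2
      _ ≤ _ := hsub

end helpers

/-- the time averages `G(x,t,l)` of
`g(x,t) = min{1, |x|^{-2α} e^{(1-ε)t}}` are sub-solutions of `∂u/∂t = a*u`
for large times. -/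
theorem stmt_8
    (α cα : ℝ) (hα : 1 / 2 < α) (hcα : 0 < cα)
    (a : ℝ → ℝ) (ha : ∀ x : ℝ, a x = cα * (1 + |x| ^ 2) ^ (-α))
    (hnorm : ∫ x : ℝ, a x = 1)
    (ε : ℝ) (hε : ε ∈ Ioo (0 : ℝ) 1)
    (g : ℝ → ℝ → ℝ)
    (hg : ∀ x t : ℝ, g x t = min 1 (|x| ^ (-(2 * α)) * Real.exp ((1 - ε) * t)))
    (Gf : ℝ → ℝ → ℝ → ℝ)
    (hGf : ∀ x t l : ℝ, Gf x t l = (1 / l) * ∫ s in t..(t + l), g x s) :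
    ∃ τ₀ > (0 : ℝ), ∀ l : ℝ, 0 < l → ∀ x t : ℝ, τ₀ ≤ t →
      ∃ d : ℝ, HasDerivAt (fun s => Gf x s l) d t ∧
        d ≤ ∫ y : ℝ, a (x - y) * Gf y t l := by
  obtain ⟨hε0, hε1⟩ := hε
  have hα0 : (0:ℝ) < α := by linarith
  have hInt : Integrable a := by
    have h : Integrable (fun x : ℝ => (1 + ‖x‖ ^ 2) ^ (-(2*α) / 2)) := by
      apply integrable_rpow_neg_one_add_norm_sq
      simpa using by linarith
    refine (h.const_mul cα).congr (Eventually.of_forall fun x => ?_)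
    rw [ha x]
    norm_num [Real.norm_eq_abs]
    left; ring_nf
  have hapos : ∀ z, 0 < a z := fun z => by rw [ha]; positivity
  have hacont : Continuous a := by
    have : Continuous fun x : ℝ => cα * (1 + |x| ^ 2) ^ (-α) := by
      apply continuous_const.mul
      apply Continuous.rpow_const (by continuity)
      intro x; left; positivity
    exact this.congr fun x => (ha x).symm
  have hg0 : ∀ y t, 0 ≤ g y t := fun y t => by rw [hg]; exact le_min zero_le_one (by positivity)
  have hg1 : ∀ y t, g y t ≤ 1 := fun y t => by rw [hg]; exact min_le_left _ _
  have hgc : ∀ x : ℝ, Continuous (fun s => g x s) := by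
    intro x
    have : Continuous (fun s : ℝ => min 1 (|x| ^ (-(2 * α)) * Real.exp ((1 - ε) * s))) :=
      continuous_const.min (continuous_const.mul (Real.continuous_exp.comp
        (continuous_const.mul continuous_id)))
    exact this.congr fun s => (hg x s).symm
  obtain ⟨τ₀, hτpos, hτ⟩ := L7 α cα hα hcα a ha hInt hnorm ε ⟨hε0, hε1⟩ g hg
  refine ⟨τ₀, hτpos, fun l hl x t ht => ?_⟩
  refine ⟨(1/l) * (g x (t+l) - g x t), ?_, ?_⟩
  · -- derivative
    have h := L6 (fun s => g x s) (hgc x) l t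
    refine h.congr_of_eventuallyEq (Eventually.of_forall fun s => ?_)
    simp only []
    rw [hGf]
  · -- the inequality
    have hle : t ≤ t + l := by linarith
    -- Step A : d ≤ (1-ε) * Gf x t l
    have stepA : (1/l) * (g x (t+l) - g x t) ≤ (1 - ε) * Gf x t l := by
      have h5 := L5 (|x| ^ (-(2*α))) (1-ε) t l (by positivity) (by linarith) hl
      have hgeq : ∀ s : ℝ, min 1 (|x| ^ (-(2*α)) * Real.exp ((1-ε)*s)) = g x s :=
        fun s => (hg x s).symm
      simp only [hgeq] at h5
      rw [hGf]
      have h6 := mul_le_mul_of_nonneg_left h5 (le_of_lt (by positivity : (0:ℝ) < 1/l))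
      calc (1/l) * (g x (t+l) - g x t) ≤ (1/l) * ((1-ε) * ∫ s in t..(t+l), g x s) := h6
        _ = (1-ε) * ((1/l) * ∫ s in t..(t+l), g x s) := by ring
    -- Step B : (1-ε) * Gf x t l ≤ ∫ y, a (x-y) * Gf y t l
    have stepB : (1 - ε) * Gf x t l ≤ ∫ y : ℝ, a (x - y) * Gf y t l := by
      have hFm : Measurable (Function.uncurry fun (s y : ℝ) => a (x - y) * g y s) := by
        apply Measurable.mul
        · exact hacont.measurable.comp (measurable_const.sub measurable_snd)
        · simp only [hg]; fun_prop
      have hbound : Integrable (fun p : ℝ × ℝ => a (x - p.2))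
          ((volume.restrict (Ioc t (t+l))).prod volume) := by
        have hconst : Integrable (fun _ : ℝ => (1:ℝ)) (volume.restrict (Ioc t (t+l))) :=
          integrableOn_const measure_Ioc_lt_top.ne
        have := hconst.mul_prod ((integrable_comp_sub_left a x).2 hInt)
        simpa using this
      have hFi : Integrable (Function.uncurry fun (s y : ℝ) => a (x - y) * g y s)
          ((volume.restrict (Ioc t (t+l))).prod volume) := by
        refine hbound.mono' hFm.aestronglyMeasurable ?_
        filter_upwards with p
        show ‖a (x - p.2) * g p.2 p.1‖ ≤ a (x - p.2)
        rw [Real.norm_eq_abs, abs_mul, abs_of_pos (hapos _), abs_of_nonneg (hg0 _ _)]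
        nth_rewrite 2 [← mul_one (a (x - p.2))]
        exact mul_le_mul_of_nonneg_left (hg1 _ _) (hapos _).le
      have hswap : ∫ s in Ioc t (t+l), ∫ y : ℝ, a (x - y) * g y s
          = ∫ y : ℝ, ∫ s in Ioc t (t+l), a (x - y) * g y s :=
        integral_integral_swap hFi
      have hGfy : ∀ y : ℝ, Gf y t l = (1/l) * ∫ s in Ioc t (t+l), g y s := by
        intro y
        rw [hGf, intervalIntegral.integral_of_le hle]
      have hRHS : ∫ y : ℝ, a (x - y) * Gf y t l
          = (1/l) * ∫ y : ℝ, ∫ s in Ioc t (t+l), a (x - y) * g y s := by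
        have e1 : (fun y : ℝ => a (x - y) * Gf y t l)
            = fun y : ℝ => (1/l) * (a (x - y) * ∫ s in Ioc t (t+l), g y s) := by
          funext y; rw [hGfy y]; ring
        have e2 : (fun y : ℝ => a (x - y) * ∫ s in Ioc t (t+l), g y s)
            = fun y : ℝ => ∫ s in Ioc t (t+l), a (x - y) * g y s :=
          funext fun y => (integral_const_mul _ _).symm
        rw [e1, integral_const_mul, e2]
      have hintg : IntegrableOn (fun s => (1-ε) * g x s) (Ioc t (t+l)) :=
        (continuous_const.mul (hgc x)).integrableOn_Ioc
      have hmono : ∫ s in Ioc t (t+l), (1-ε) * g x s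
          ≤ ∫ s in Ioc t (t+l), ∫ y : ℝ, a (x - y) * g y s := by
        apply setIntegral_mono_on hintg hFi.integral_prod_left measurableSet_Ioc
        intro s hs
        exact hτ s (le_trans ht hs.1.le) x
      calc (1 - ε) * Gf x t l = (1/l) * ∫ s in Ioc t (t+l), (1-ε) * g x s := by
            rw [hGfy x, integral_const_mul]; ring
        _ ≤ (1/l) * ∫ s in Ioc t (t+l), ∫ y : ℝ, a (x - y) * g y s :=
            mul_le_mul_of_nonneg_left hmono (by positivity)
        _ = (1/l) * ∫ y : ℝ, ∫ s in Ioc t (t+l), a (x - y) * g y s := by rw [hswap]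
        _ = ∫ y : ℝ, a (x - y) * Gf y t l := hRHS.symm
    linarith
end

section
/- Let α > 1/2, let a(x) = c_α (1+|x|²)^{-α} with c_α > 0 the constant making ∫_ℝ a = 1, let ε ∈ (0,1), and define h(x,t) = 1_{x ≤ 0} + min{1, x^{−2α+1} e^{(1−ε)t}}·1_{x > 0} and H(x,t,l) = (1/l)∫_t^{t+l} h(x,s) ds for l > 0. Then there exists τ₀ = τ₀(ε) > 0 such that for all l > 0, all x ∈ ℝ, and all t ≥ τ₀: ∂H/∂t(x,t,l) ≤ (a*H)(x,t,l), where the convolution is in the x variable; i.e., H(·,·,l) is a subsolution to ∂u/∂t = a*u on [τ₀,∞). -/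
open MeasureTheory Real Set
set_option maxHeartbeats 1000000

lemma time_incr (c k t l : ℝ) (hc : 0 < c) (hk : 0 < k) (hl : 0 < l) :
    min 1 (c * Real.exp (k * (t + l))) - min 1 (c * Real.exp (k * t)) ≤
      k * ∫ s in t..(t + l), min 1 (c * Real.exp (k * s)) := by
  set φ : ℝ → ℝ := fun s => c * Real.exp (k * s) with hφ
  have hφc : Continuous φ := by continuity
  have hφpos : ∀ s, 0 < φ s := fun s => by positivity
  have hφmono : ∀ ⦃s₁ s₂ : ℝ⦄, s₁ ≤ s₂ → φ s₁ ≤ φ s₂ := by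
    intro s₁ s₂ hs
    exact mul_le_mul_of_nonneg_left (Real.exp_le_exp.2 (by nlinarith)) hc.le
  have hgc : Continuous (fun s => min 1 (φ s)) := continuous_const.min hφc
  have hgnn : ∀ s, 0 ≤ min 1 (φ s) := fun s => le_min one_pos.le (hφpos s).le
  have hii : ∀ u v : ℝ, IntervalIntegrable (fun s => min 1 (φ s)) volume u v :=
    fun u v => hgc.intervalIntegrable u v
  by_cases hsat : 1 ≤ φ t
  · have h1 : min 1 (φ (t + l)) = 1 := min_eq_left (hsat.trans (hφmono (by linarith)))
    have h2 : min 1 (φ t) = 1 := min_eq_left hsat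
    rw [h1, h2]
    have : 0 ≤ ∫ s in t..(t + l), min 1 (φ s) :=
      intervalIntegral.integral_nonneg (by linarith) (fun s _ => hgnn s)
    nlinarith
  · push_neg at hsat
    set τ : ℝ := -(Real.log c) / k with hτ
    have hφτ : φ τ = 1 := by
      have : k * τ = -Real.log c := by rw [hτ]; field_simp [hk.ne']
      rw [hφ]; simp only [this, Real.exp_neg, Real.exp_log hc]
      field_simp
    have htτ : t ≤ τ := by
      by_contra hcon
      push_neg at hcon
      exact absurd (hφτ ▸ hφmono hcon.le) (not_le.2 hsat)
    set u : ℝ := min τ (t + l) with hu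
    have htu : t ≤ u := le_min htτ (by linarith)
    have hutl : u ≤ t + l := min_le_right _ _
    have huτ : u ≤ τ := min_le_left _ _
    -- on [t,u], min 1 (φ s) = φ s
    have hcongr : ∫ s in t..u, min 1 (φ s) = ∫ s in t..u, φ s := by
      apply intervalIntegral.integral_congr
      intro s hs
      rw [uIcc_of_le htu] at hs
      exact min_eq_right ((hφmono (hs.2.trans huτ)).trans hφτ.le)
    have hint : ∫ s in t..u, φ s = (c / k) * (Real.exp (k * u) - Real.exp (k * t)) := by
      rw [hφ]
      rw [intervalIntegral.integral_const_mul]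
      have := intervalIntegral.integral_comp_mul_left (a := t) (b := u) Real.exp (ne_of_gt hk)
      rw [this, integral_exp]
      simp [smul_eq_mul]
      ring
    have hmin1 : min 1 (φ (t + l)) = φ u := by
      rcases le_total τ (t + l) with hcase | hcase
      · have : u = τ := min_eq_left hcase
        rw [this, hφτ]
        exact min_eq_left (hφτ ▸ hφmono hcase)
      · have : u = t + l := min_eq_right hcase
        rw [this]
        exact min_eq_right ((hφmono hcase).trans hφτ.le)
    have hmin2 : min 1 (φ t) = φ t := min_eq_right hsat.le
    rw [hmin1, hmin2]
    have hsplit : ∫ s in t..(t+l), min 1 (φ s) =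
        (∫ s in t..u, min 1 (φ s)) + ∫ s in u..(t+l), min 1 (φ s) :=
      (intervalIntegral.integral_add_adjacent_intervals (hii t u) (hii u (t+l))).symm
    have h2nn : 0 ≤ ∫ s in u..(t+l), min 1 (φ s) :=
      intervalIntegral.integral_nonneg hutl (fun s _ => hgnn s)
    have : φ u - φ t = k * ∫ s in t..u, min 1 (φ s) := by
      rw [hcongr, hint, hφ]
      field_simp
    rw [this, hsplit]
    nlinarith

lemma conv_lower
    (α cα : ℝ) (hα : 1 / 2 < α) (hcα : 0 < cα)
    (a : ℝ → ℝ) (ha : ∀ x : ℝ, a x = cα * (1 + |x| ^ 2) ^ (-α))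
    (hnorm : ∫ x : ℝ, a x = 1)
    (ε : ℝ) (hε : ε ∈ Ioo (0 : ℝ) 1)
    (h : ℝ → ℝ → ℝ)
    (hh : ∀ x t : ℝ, h x t =
      (if x ≤ 0 then (1 : ℝ) else 0) +
        min 1 ((if 0 < x then x ^ (-(2 * α) + 1) * Real.exp ((1 - ε) * t) else 0))) :
    ∃ τ₀ > (0 : ℝ), ∀ s : ℝ, τ₀ ≤ s → ∀ x : ℝ,
      (1 - ε) * h x s ≤ ∫ y : ℝ, a (x - y) * h y s := by
  obtain ⟨hε0, hε1⟩ := hε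
  set k : ℝ := 1 - ε with hk
  have hk0 : 0 < k := by simp only [hk]; linarith
  set m : ℝ := 2 * α - 1 with hm
  have hm0 : 0 < m := by simp only [hm]; linarith
  have hem : -(2 * α) + 1 = -m := by simp only [hm]; ring
  -- basic facts about a
  have ha_pos : ∀ x, 0 < a x := by
    intro x; rw [ha x]
    have : (0:ℝ) < 1 + |x| ^ 2 := by positivity
    positivity
  have ha_int : Integrable a := by
    by_contra hcon
    rw [integral_undef hcon] at hnorm
    norm_num at hnorm
  have ha_cont : Continuous a := by
    have h2 : Continuous fun x : ℝ => cα * (1 + |x| ^ 2) ^ (-α) := by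
      apply continuous_const.mul
      apply Continuous.rpow_const
      · continuity
      · intro x; left; positivity
    have : a = fun x : ℝ => cα * (1 + |x| ^ 2) ^ (-α) := funext ha
    rw [this]; exact h2
  -- basic facts about h
  have h_nonneg : ∀ x s, 0 ≤ h x s := by
    intro x s; rw [hh]
    have h1 : (0:ℝ) ≤ if x ≤ 0 then (1:ℝ) else 0 := by positivity
    have h2 : (0:ℝ) ≤ if 0 < x then x ^ (-(2*α)+1) * Real.exp (k*s) else 0 := by
      split
      · have : (0:ℝ) ≤ x ^ (-(2*α)+1) := Real.rpow_nonneg (by linarith) _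
        positivity
      · exact le_refl 0
    have h3 := le_min zero_le_one h2
    linarith
  have h_le_one : ∀ x s, h x s ≤ 1 := by
    intro x s; rw [hh]
    by_cases hx : x ≤ 0
    · simp [hx, not_lt.2 hx]
    · push_neg at hx
      rw [if_neg (not_le.2 hx)]
      simpa using min_le_left 1 _
  have h_one : ∀ s x : ℝ, x ≤ Real.exp (k * s / m) → h x s = 1 := by
    intro s x hx
    rw [hh]
    by_cases hx0 : x ≤ 0
    · simp [hx0, not_lt.2 hx0]
    · push_neg at hx0
      rw [if_neg (not_le.2 hx0), if_pos hx0, hem, zero_add]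
      have h1 : Real.exp (k*s/m) ^ (-m) ≤ x ^ (-m) :=
        Real.rpow_le_rpow_of_nonpos hx0 hx (by linarith)
      have h2 : Real.exp (k*s/m) ^ (-m) = Real.exp (-(k*s)) := by
        rw [← Real.exp_mul]; congr 1; field_simp
      have h3 : (1:ℝ) ≤ x ^ (-m) * Real.exp (k*s) := by
        have h4 : Real.exp (-(k*s)) * Real.exp (k*s) = 1 := by
          rw [← Real.exp_add]; simp
        rw [h2] at h1
        nlinarith [Real.exp_pos (k*s), Real.exp_pos (-(k*s))]
      exact min_eq_left h3
  have h_mono : ∀ s x y : ℝ, x ≤ y → h y s ≤ h x s := by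
    intro s x y hxy
    rw [hh y s, hh x s]
    by_cases hy0 : y ≤ 0
    · have hx0 : x ≤ 0 := hxy.trans hy0
      simp [hx0, hy0, not_lt.2 hx0, not_lt.2 hy0]
    · push_neg at hy0
      rw [if_neg (not_le.2 hy0), if_pos hy0, zero_add]
      by_cases hx0 : x ≤ 0
      · rw [if_pos hx0, if_neg (not_lt.2 hx0)]
        have h1 : min (1:ℝ) (y ^ (-(2*α)+1) * Real.exp (k*s)) ≤ 1 := min_le_left _ _
        have h2 : (0:ℝ) ≤ min 1 (0:ℝ) := by norm_num
        linarith [min_le_left (1:ℝ) (0:ℝ)]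
      · push_neg at hx0
        rw [if_neg (not_le.2 hx0), if_pos hx0, zero_add, hem]
        have h1 : y ^ (-m) ≤ x ^ (-m) :=
          Real.rpow_le_rpow_of_nonpos hx0 hxy (by linarith)
        exact min_le_min (le_refl 1)
          (mul_le_mul_of_nonneg_right h1 (Real.exp_pos _).le)
  have h_ratio : ∀ s x : ℝ, 0 < x → ∀ R : ℝ, 0 < R →
      (x/(x+R)) ^ m * h x s ≤ h (x+R) s := by
    intro s x hx R hR
    have hxR : 0 < x + R := by linarith
    set q : ℝ := (x/(x+R)) ^ m with hq
    have hq0 : 0 ≤ q := Real.rpow_nonneg (by positivity) m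
    have hq1 : q ≤ 1 := Real.rpow_le_one (by positivity)
      (by rw [div_le_one hxR]; linarith) hm0.le
    rw [hh x s, hh (x+R) s, if_neg (not_le.2 hx), if_neg (not_le.2 hxR),
      if_pos hx, if_pos hxR, hem, zero_add, zero_add]
    set E := Real.exp (k*s) with hE
    have hE0 : 0 < E := Real.exp_pos _
    have hxm : (0:ℝ) < x ^ m := Real.rpow_pos_of_pos hx m
    have hxRm : (0:ℝ) < (x+R) ^ m := Real.rpow_pos_of_pos hxR m
    have key : (x+R) ^ (-m) = q * x ^ (-m) := by
      rw [hq, Real.div_rpow hx.le hxR.le, Real.rpow_neg hxR.le, Real.rpow_neg hx.le]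
      field_simp
    rw [key]
    have hb0 : (0:ℝ) ≤ x ^ (-m) * E := by
      have : (0:ℝ) ≤ x ^ (-m) := Real.rpow_nonneg hx.le _
      positivity
    apply le_min
    · calc q * min 1 (x ^ (-m) * E) ≤ 1 * 1 :=
          mul_le_mul hq1 (min_le_left _ _) (le_min zero_le_one hb0) zero_le_one
        _ = 1 := mul_one 1
    · calc q * min 1 (x ^ (-m) * E) ≤ q * (x ^ (-m) * E) :=
          mul_le_mul_of_nonneg_left (min_le_right _ _) hq0
        _ = q * x ^ (-m) * E := by ring
  -- choose R
  obtain ⟨R, hR1, hRint⟩ : ∃ R : ℝ, 1 ≤ R ∧ 1 - ε/2 ≤ ∫ z in (-R)..R, a z := by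
    have htend : Filter.Tendsto (fun r : ℝ => ∫ z in (-r)..r, a z)
        Filter.atTop (nhds 1) := by
      rw [← hnorm]
      exact intervalIntegral_tendsto_integral ha_int Filter.tendsto_neg_atTop_atBot
        Filter.tendsto_id
    have h1 : ∀ᶠ r : ℝ in Filter.atTop, 1 - ε/2 ≤ ∫ z in (-r)..r, a z :=
      htend.eventually (eventually_ge_nhds (by linarith))
    obtain ⟨R, hR⟩ := (h1.and (Filter.eventually_ge_atTop 1)).exists
    exact ⟨R, hR.2, hR.1⟩
  have hR0 : (0:ℝ) < R := by linarith
  -- choose θ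
  obtain ⟨θ, hθ0, hθ1, hθm⟩ : ∃ θ : ℝ, 0 < θ ∧ θ < 1 ∧ 1 - ε/2 ≤ θ ^ m := by
    have hc : ContinuousAt (fun t : ℝ => t ^ m) 1 :=
      Real.continuousAt_rpow_const 1 m (Or.inl one_ne_zero)
    have hev : ∀ᶠ t : ℝ in nhds 1, 1 - ε/2 < t ^ m := by
      apply hc.eventually_const_lt
      have h1 : (fun t : ℝ => t ^ m) 1 = 1 := by simp
      rw [h1]; linarith
    rw [Metric.eventually_nhds_iff] at hev
    obtain ⟨δ, hδ0, hδ⟩ := hev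
    refine ⟨max (1/2) (1 - δ/2), lt_max_of_lt_left (by norm_num), ?_, ?_⟩
    · apply max_lt (by norm_num) (by linarith)
    · apply le_of_lt; apply hδ
      rw [Real.dist_eq, abs_lt]
      constructor
      · have := le_max_right (1/2 : ℝ) (1 - δ/2); linarith
      · have : max (1/2:ℝ) (1 - δ/2) < 1 := max_lt (by norm_num) (by linarith)
        linarith
  set x₁ : ℝ := θ * R / (1 - θ) with hx₁
  have hx₁0 : 0 < x₁ := div_pos (mul_pos hθ0 hR0) (by linarith)
  refine ⟨max 1 (m * Real.log (x₁ + R) / k), lt_max_of_lt_left one_pos, ?_⟩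
  intro s hs x
  have hXs : x₁ + R ≤ Real.exp (k * s / m) := by
    have h1 : m * Real.log (x₁ + R) / k ≤ s := le_trans (le_max_right _ _) hs
    have h2 : Real.log (x₁ + R) ≤ k * s / m := by
      rw [div_le_iff₀ hk0] at h1
      rw [le_div_iff₀ hm0]
      nlinarith
    calc x₁ + R = Real.exp (Real.log (x₁ + R)) := (Real.exp_log (by positivity)).symm
      _ ≤ _ := Real.exp_le_exp.2 h2
  -- integrability
  have haxi : Integrable (fun y => a (x - y)) := ha_int.comp_sub_left x
  have hmeas_h : Measurable (fun y => h y s) := by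
    have heq : (fun y => h y s) = fun y => (if y ≤ 0 then (1:ℝ) else 0) +
        min 1 (if 0 < y then y ^ (-(2*α)+1) * Real.exp (k*s) else 0) :=
      funext fun y => hh y s
    rw [heq]
    apply Measurable.add
    · exact Measurable.ite (measurableSet_le measurable_id measurable_const)
        measurable_const measurable_const
    · apply measurable_const.min
      apply Measurable.ite (measurableSet_lt measurable_const measurable_id)
      · exact (measurable_id.pow_const _).mul_const _
      · exact measurable_const
  have hF_meas : AEStronglyMeasurable (fun y => a (x - y) * h y s) volume :=
    (((ha_cont.comp (continuous_const.sub continuous_id)).measurable).mul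
      hmeas_h).aestronglyMeasurable
  have hF_int : Integrable (fun y => a (x - y) * h y s) := by
    apply haxi.mono hF_meas
    refine ae_of_all _ fun y => ?_
    rw [Real.norm_eq_abs, Real.norm_eq_abs, abs_mul,
      abs_of_pos (ha_pos (x - y)), abs_of_nonneg (h_nonneg y s)]
    nlinarith [ha_pos (x-y), h_le_one y s, h_nonneg y s]
  -- main chain
  have hle : x - R ≤ x + R := by linarith
  have step1 : ∫ y in Ioc (x-R) (x+R), a (x-y) * h y s ≤ ∫ y, a (x-y) * h y s :=
    setIntegral_le_integral hF_int
      (ae_of_all _ fun y => mul_nonneg (ha_pos _).le (h_nonneg _ _))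
  have step2 : ∫ y in (x-R)..(x+R), a (x-y) * h (x+R) s ≤
      ∫ y in (x-R)..(x+R), a (x-y) * h y s := by
    apply intervalIntegral.integral_mono_on hle
    · exact ((ha_cont.comp (continuous_const.sub continuous_id)).mul
        continuous_const).intervalIntegrable _ _
    · exact hF_int.intervalIntegrable
    · intro y hy
      exact mul_le_mul_of_nonneg_left (h_mono s y (x+R) hy.2) (ha_pos _).le
  have step3 : ∫ y in (x-R)..(x+R), a (x-y) * h (x+R) s =
      h (x+R) s * ∫ z in (-R)..R, a z := by
    rw [intervalIntegral.integral_mul_const]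
    have e1 : ∫ y in (x-R)..(x+R), a (x - y) = ∫ z in (-R)..R, a z := by
      rw [intervalIntegral.integral_comp_sub_left a x]
      norm_num
    rw [e1, mul_comm]
  have key : (1 - ε/2) * h x s ≤ h (x+R) s := by
    by_cases hx1 : x ≤ x₁
    · have he1 : h (x+R) s = 1 := h_one s (x+R) (by linarith)
      rw [he1]
      nlinarith [h_le_one x s, h_nonneg x s]
    · push_neg at hx1
      have hx0 : 0 < x := lt_trans hx₁0 hx1
      have h1 : θ ≤ x / (x + R) := by
        rw [le_div_iff₀ (by linarith : (0:ℝ) < x + R)]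
        have h2 : θ * R / (1-θ) ≤ x := hx1.le
        rw [div_le_iff₀ (by linarith : (0:ℝ) < 1-θ)] at h2
        nlinarith
      have h2 : θ ^ m ≤ (x/(x+R)) ^ m := Real.rpow_le_rpow hθ0.le h1 hm0.le
      calc (1-ε/2) * h x s ≤ θ ^ m * h x s :=
            mul_le_mul_of_nonneg_right hθm (h_nonneg x s)
        _ ≤ (x/(x+R)) ^ m * h x s :=
            mul_le_mul_of_nonneg_right h2 (h_nonneg x s)
        _ ≤ h (x+R) s := h_ratio s x hx0 R hR0
  calc k * h x s ≤ (1-ε/2) * ((1-ε/2) * h x s) := by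
        simp only [hk]
        nlinarith [h_nonneg x s, mul_nonneg (h_nonneg x s) (sq_nonneg ε)]
    _ ≤ (1-ε/2) * h (x+R) s := mul_le_mul_of_nonneg_left key (by linarith)
    _ ≤ (∫ z in (-R)..R, a z) * h (x+R) s :=
        mul_le_mul_of_nonneg_right hRint (h_nonneg _ _)
    _ = h (x+R) s * ∫ z in (-R)..R, a z := mul_comm _ _
    _ = ∫ y in (x-R)..(x+R), a (x-y) * h (x+R) s := step3.symm
    _ ≤ ∫ y in (x-R)..(x+R), a (x-y) * h y s := step2
    _ = ∫ y in Ioc (x-R) (x+R), a (x-y) * h y s := intervalIntegral.integral_of_le hle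
    _ ≤ ∫ y, a (x-y) * h y s := step1

/-- the time averages `H(x,t,l)` of
`h(x,t) = 1_{x ≤ 0} + min{1, x^{-2α+1} e^{(1-ε)t}}·1_{x > 0}` are
sub-solutions of `∂u/∂t = a*u` for large times. -/
theorem stmt_9
    (α cα : ℝ) (hα : 1 / 2 < α) (hcα : 0 < cα)
    (a : ℝ → ℝ) (ha : ∀ x : ℝ, a x = cα * (1 + |x| ^ 2) ^ (-α))
    (hnorm : ∫ x : ℝ, a x = 1)
    (ε : ℝ) (hε : ε ∈ Ioo (0 : ℝ) 1)
    (h : ℝ → ℝ → ℝ)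
    (hh : ∀ x t : ℝ, h x t =
      (if x ≤ 0 then (1 : ℝ) else 0) +
        min 1 ((if 0 < x then x ^ (-(2 * α) + 1) * Real.exp ((1 - ε) * t) else 0)))
    (Hf : ℝ → ℝ → ℝ → ℝ)
    (hHf : ∀ x t l : ℝ, Hf x t l = (1 / l) * ∫ s in t..(t + l), h x s) :
    ∃ τ₀ > (0 : ℝ), ∀ l : ℝ, 0 < l → ∀ x t : ℝ, τ₀ ≤ t →
      ∃ d : ℝ, HasDerivAt (fun s => Hf x s l) d t ∧
        d ≤ ∫ y : ℝ, a (x - y) * Hf y t l := by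
  obtain ⟨hε0, hε1⟩ := hε
  set k : ℝ := 1 - ε with hk
  have hk0 : 0 < k := by simp only [hk]; linarith
  -- basics about a
  have ha_pos : ∀ x, 0 < a x := by
    intro x; rw [ha x]
    have : (0:ℝ) < 1 + |x| ^ 2 := by positivity
    positivity
  have ha_int : Integrable a := by
    by_contra hcon
    rw [integral_undef hcon] at hnorm
    norm_num at hnorm
  have ha_cont : Continuous a := by
    have h2 : Continuous fun x : ℝ => cα * (1 + |x| ^ 2) ^ (-α) := by
      apply continuous_const.mul
      apply Continuous.rpow_const
      · continuity
      · intro x; left; positivity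
    have : a = fun x : ℝ => cα * (1 + |x| ^ 2) ^ (-α) := funext ha
    rw [this]; exact h2
  -- basics about h
  have h_nonneg : ∀ x s, 0 ≤ h x s := by
    intro x s; rw [hh]
    have h1 : (0:ℝ) ≤ if x ≤ 0 then (1:ℝ) else 0 := by positivity
    have h2 : (0:ℝ) ≤ if 0 < x then x ^ (-(2*α)+1) * Real.exp (k*s) else 0 := by
      split
      · have : (0:ℝ) ≤ x ^ (-(2*α)+1) := Real.rpow_nonneg (by linarith) _
        positivity
      · exact le_refl 0
    have h3 := le_min zero_le_one h2
    linarith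
  have h_le_one : ∀ x s, h x s ≤ 1 := by
    intro x s; rw [hh]
    by_cases hx : x ≤ 0
    · simp [hx, not_lt.2 hx]
    · push_neg at hx
      rw [if_neg (not_le.2 hx)]
      simpa using min_le_left 1 _
  have h_cont : ∀ x, Continuous (fun s => h x s) := by
    intro x
    have heq : (fun s => h x s) = fun s => (if x ≤ 0 then (1:ℝ) else 0) +
        min 1 (if 0 < x then x ^ (-(2*α)+1) * Real.exp (k*s) else 0) :=
      funext fun s => hh x s
    rw [heq]
    apply continuous_const.add
    apply continuous_const.min
    by_cases hx : 0 < x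
    · simp only [if_pos hx]
      exact (continuous_const.mul ((Real.continuous_exp.comp
        (continuous_const.mul continuous_id))))
    · simp only [if_neg hx]
      exact continuous_const
  have hmeasH : Measurable (fun p : ℝ × ℝ => h p.1 p.2) := by
    have heq : (fun p : ℝ × ℝ => h p.1 p.2) = fun p => (if p.1 ≤ 0 then (1:ℝ) else 0) +
        min 1 (if 0 < p.1 then p.1 ^ (-(2*α)+1) * Real.exp (k*p.2) else 0) :=
      funext fun p => hh p.1 p.2
    rw [heq]
    apply Measurable.add
    · exact Measurable.ite (measurableSet_le measurable_fst measurable_const)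
        measurable_const measurable_const
    · apply measurable_const.min
      apply Measurable.ite (measurableSet_lt measurable_const measurable_fst)
      · exact (measurable_fst.pow_const _).mul
          (Real.measurable_exp.comp (measurable_snd.const_mul _))
      · exact measurable_const
  -- the pointwise convolution bound
  obtain ⟨τ₀, hτ₀0, hτ₀⟩ := conv_lower α cα hα hcα a ha hnorm ε ⟨hε0, hε1⟩ h hh
  refine ⟨τ₀, hτ₀0, ?_⟩
  intro l hl x t ht
  have htl : t ≤ t + l := by linarith
  have hInt : ∀ (z : ℝ) (u v : ℝ), IntervalIntegrable (fun s => h z s) volume u v :=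
    fun z u v => (h_cont z).intervalIntegrable u v
  -- derivative
  have hF : ∀ z s : ℝ, HasDerivAt (fun u => ∫ r in (0:ℝ)..u, h z r) (h z s) s := by
    intro z s
    exact intervalIntegral.integral_hasDerivAt_right (hInt z 0 s)
      ((h_cont z).stronglyMeasurableAtFilter _ _) (h_cont z).continuousAt
  have heq : (fun s => Hf x s l) = fun s =>
      (1/l) * ((∫ r in (0:ℝ)..(s+l), h x r) - ∫ r in (0:ℝ)..s, h x r) := by
    funext s
    rw [hHf]
    congr 1
    rw [intervalIntegral.integral_interval_sub_left (hInt x 0 (s+l)) (hInt x 0 s)]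
  have hd : HasDerivAt (fun s => Hf x s l) ((1/l) * (h x (t+l) - h x t)) t := by
    rw [heq]
    exact (((hF x (t+l)).comp_add_const t l).sub (hF x t)).const_mul (1/l)
  refine ⟨(1/l) * (h x (t+l) - h x t), hd, ?_⟩
  -- step A : increment bound
  have stepA : h x (t+l) - h x t ≤ k * ∫ s in t..(t+l), h x s := by
    by_cases hx : x ≤ 0
    · have hone : ∀ s : ℝ, h x s = 1 := by
        intro s; rw [hh]; simp [hx, not_lt.2 hx]
      rw [hone, hone]
      have : ∫ s in t..(t+l), h x s = l := by
        rw [intervalIntegral.integral_congr (fun s _ => hone s)]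
        simp
      rw [this]
      nlinarith
    · push_neg at hx
      set c : ℝ := x ^ (-(2*α)+1) with hc
      have hc0 : 0 < c := Real.rpow_pos_of_pos hx _
      have hxe : ∀ s : ℝ, h x s = min 1 (c * Real.exp (k*s)) := by
        intro s; rw [hh]
        simp [not_le.2 hx, hx, hc]
      rw [hxe, hxe, intervalIntegral.integral_congr (fun s _ => hxe s)]
      exact time_incr c k t l hc0 hk0 hl
  -- step B : Fubini & pointwise bound
  set ν : Measure ℝ := volume.restrict (Ioc t (t+l)) with hν
  have hν_fin : ν (univ) < ⊤ := by
    rw [hν, Measure.restrict_apply MeasurableSet.univ]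
    simp [Real.volume_Ioc]
  have hHf_set : ∀ z : ℝ, Hf z t l = (1/l) * ∫ s, h z s ∂ν := by
    intro z
    rw [hHf, intervalIntegral.integral_of_le htl, hν]
  -- integrability of F on the product
  have hone_int : Integrable (fun _ : ℝ => (1:ℝ)) ν := by
    rw [hν]
    exact integrableOn_const (by simp [Real.volume_Ioc])
  have hprod_dom : Integrable (fun p : ℝ × ℝ => a (x - p.1) * (1:ℝ)) (volume.prod ν) :=
    (ha_int.comp_sub_left x).mul_prod hone_int
  have hprod_meas : AEStronglyMeasurable (fun p : ℝ × ℝ => a (x - p.1) * h p.1 p.2)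
      (volume.prod ν) := by
    apply Measurable.aestronglyMeasurable
    exact ((ha_cont.measurable.comp (measurable_const.sub measurable_fst)).mul hmeasH)
  have hprodF : Integrable (fun p : ℝ × ℝ => a (x - p.1) * h p.1 p.2) (volume.prod ν) := by
    apply hprod_dom.mono hprod_meas
    refine ae_of_all _ fun p => ?_
    rw [Real.norm_eq_abs, Real.norm_eq_abs, abs_mul, abs_mul,
      abs_of_pos (ha_pos (x - p.1)), abs_of_nonneg (h_nonneg p.1 p.2)]
    simp only [abs_one, mul_one]
    nlinarith [ha_pos (x - p.1), h_le_one p.1 p.2, h_nonneg p.1 p.2]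
  have hswap : ∫ y, ∫ s, a (x - y) * h y s ∂ν = ∫ s, (∫ y, a (x - y) * h y s) ∂ν :=
    integral_integral_swap hprodF
  -- rewrite the RHS
  have hRHS : ∫ y, a (x - y) * Hf y t l = (1/l) * ∫ s, (∫ y, a (x - y) * h y s) ∂ν := by
    rw [← hswap]
    have e1 : (fun y => a (x - y) * Hf y t l) =
        fun y => (1/l) * ∫ s, a (x - y) * h y s ∂ν := by
      funext y
      rw [hHf_set y, integral_const_mul]
      ring
    rw [e1, integral_const_mul]
  rw [hRHS]
  -- pointwise bound inside
  have hmono : ∫ s, k * h x s ∂ν ≤ ∫ s, (∫ y, a (x - y) * h y s) ∂ν := by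
    apply setIntegral_mono_on
    · exact (continuous_const.mul (h_cont x)).integrableOn_Ioc
    · exact hprodF.integral_prod_right
    · exact measurableSet_Ioc
    · intro s hs
      exact hτ₀ s (le_trans ht hs.1.le) x
  have e2 : ∫ s in t..(t+l), h x s = ∫ s, h x s ∂ν := intervalIntegral.integral_of_le htl
  have e3 : ∫ s, k * h x s ∂ν = k * ∫ s, h x s ∂ν := integral_const_mul k _
  have hfin : h x (t+l) - h x t ≤ ∫ s, (∫ y, a (x-y) * h y s) ∂ν := by
    calc h x (t+l) - h x t ≤ k * ∫ s in t..(t+l), h x s := stepA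
      _ = ∫ s, k * h x s ∂ν := by rw [e2, e3]
      _ ≤ _ := hmono
  have h1l : (0:ℝ) ≤ 1/l := by positivity
  exact mul_le_mul_of_nonneg_left hfin h1l
end

section
/- Let α > 1/2, let a(x) = c_α (1+|x|²)^{-α} with c_α > 0 the constant making ∫_ℝ a = 1, and let γ ∈ (1/(2α), 1). Then for every δ ∈ (0,1) there exists λ = λ(δ,γ) > 0 such that, with ω_λ(x) := min{λ, (a(x))^γ}, one has (a*ω_λ)(x) ≤ (1+δ)·ω_λ(x) for all x ∈ ℝ. -/
open MeasureTheory Real Set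

private lemma key_ineq {R η t s : ℝ} (hR : 0 < R) (hη : 0 < η) (h4R : 4 * R ≤ t)
    (h4Rη : 4 * R ≤ η * t) (hs : (t - R) ^ 2 ≤ s) : 1 + t ^ 2 ≤ (1 + η) * (1 + s) := by
  have e3 : η * (t - R) ^ 2 ≤ η * s := mul_le_mul_of_nonneg_left hs hη.le
  have e4 : 4 * R * t ≤ η * t * t := mul_le_mul_of_nonneg_right h4Rη (by linarith)
  nlinarith [sq_nonneg (t - R), sq_nonneg R, mul_pos hR (show (0:ℝ) < t by linarith)]

private lemma cancel_aux {c d t : ℝ} (hc : c ≠ 0) : d / c * (c * t) = d * t := by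
  field_simp

private lemma cancel_aux2 {u v d : ℝ} (hu : u ≠ 0) (hv : v ≠ 0) : u * v * (d / (u * v)) = d := by
  field_simp

private lemma tail_small {f : ℝ → ℝ} (hf : Integrable f) (hf0 : ∀ x, 0 ≤ f x) {ε : ℝ} (hε : 0 < ε) :
    ∃ R > (0:ℝ), ∫ y in (Icc (-R) R)ᶜ, f y ≤ ε := by
  have hmono : Monotone (fun n : ℕ => Icc (-(n:ℝ)) (n:ℝ)) := by
    intro m n hmn
    have : (m:ℝ) ≤ n := by exact_mod_cast hmn
    exact Icc_subset_Icc (by linarith) this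
  have hunion : (⋃ n : ℕ, Icc (-(n:ℝ)) (n:ℝ)) = univ := by
    ext y
    simp only [mem_iUnion, mem_Icc, mem_univ, iff_true]
    obtain ⟨n, hn⟩ := exists_nat_ge |y|
    obtain ⟨h1, h2⟩ := abs_le.mp hn
    exact ⟨n, h1, h2⟩
  have htend := tendsto_setIntegral_of_monotone (fun n => measurableSet_Icc) hmono
    (by rw [hunion]; exact hf.integrableOn)
  rw [hunion, setIntegral_univ] at htend
  have hev := htend.eventually (eventually_gt_nhds (show (∫ x, f x) - ε < ∫ x, f x by linarith))
  obtain ⟨n, hn⟩ := hev.exists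
  refine ⟨(n:ℝ) + 1, by positivity, ?_⟩
  have hsub : ∫ y in Icc (-(n:ℝ)) (n:ℝ), f y ≤ ∫ y in Icc (-((n:ℝ)+1)) ((n:ℝ)+1), f y := by
    apply setIntegral_mono_set hf.integrableOn
    · exact Filter.Eventually.of_forall fun x => hf0 x
    · exact HasSubset.Subset.eventuallyLE (Icc_subset_Icc (by linarith) (by linarith))
  have hsplit := integral_add_compl (measurableSet_Icc :
    MeasurableSet (Icc (-((n:ℝ)+1)) ((n:ℝ)+1))) hf
  linarith


/-- for every `δ ∈ (0,1)` there is `λ > 0` such that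
`a * ω_λ ≤ (1+δ) ω_λ` where `ω_λ = min{λ, a^γ}`. -/
theorem stmt_11
    (α cα : ℝ) (hα : 1 / 2 < α) (hcα : 0 < cα)
    (a : ℝ → ℝ) (ha : ∀ x : ℝ, a x = cα * (1 + |x| ^ 2) ^ (-α))
    (hnorm : ∫ x : ℝ, a x = 1)
    (γ : ℝ) (hγ : γ ∈ Ioo (1 / (2 * α)) 1) :
    ∀ δ : ℝ, δ ∈ Ioo (0 : ℝ) 1 → ∃ lam > (0 : ℝ),
      ∀ x : ℝ, (∫ y : ℝ, a y * min lam ((a (x - y)) ^ γ)) ≤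
        (1 + δ) * min lam ((a x) ^ γ) := by
  intro δ hδ
  obtain ⟨hδ0, hδ1⟩ := hδ
  have hα0 : 0 < α := by linarith
  have hγ1 : γ < 1 := hγ.2
  have hγ0 : 0 < γ := lt_trans (by positivity) hγ.1
  set p : ℝ := α * γ with hp_def
  have hp : 1 / 2 < p := by
    have h1 : 1 < γ * (2 * α) := (div_lt_iff₀ (by positivity)).mp hγ.1
    nlinarith
  have hp0 : 0 < p := by linarith
  -- basic facts about a
  have ha_base : ∀ x : ℝ, (0:ℝ) < 1 + x ^ 2 := fun x => by positivity
  have haw : ∀ x : ℝ, a x = cα * (1 + x ^ 2) ^ (-α) := fun x => by rw [ha x, sq_abs]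
  have ha_pos : ∀ x, 0 < a x := fun x => by
    rw [haw x]; exact mul_pos hcα (rpow_pos_of_pos (ha_base x) _)
  have ha_le_cα : ∀ x, a x ≤ cα := by
    intro x
    rw [haw x]
    calc cα * (1 + x ^ 2) ^ (-α) ≤ cα * 1 := by
          refine mul_le_mul_of_nonneg_left ?_ hcα.le
          exact rpow_le_one_of_one_le_of_nonpos (by nlinarith [sq_nonneg x]) (by linarith)
      _ = cα := mul_one cα
  have ha_mono : ∀ u v : ℝ, |u| ≤ |v| → a v ≤ a u := by
    intro u v h
    rw [haw u, haw v]
    refine mul_le_mul_of_nonneg_left ?_ hcα.le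
    refine rpow_le_rpow_of_nonpos (ha_base u) ?_ (by linarith)
    have : u ^ 2 ≤ v ^ 2 := by
      rw [← sq_abs u, ← sq_abs v]
      exact pow_le_pow_left₀ (abs_nonneg u) h 2
    linarith
  have hint_shape : ∀ β : ℝ, 1 / 2 < β → Integrable (fun x : ℝ => (1 + x ^ 2) ^ (-β)) := by
    intro β hβ
    have h1 : ((Module.finrank ℝ ℝ : ℕ) : ℝ) < 2 * β := by
      simp only [Module.finrank_self, Nat.cast_one]; linarith
    have h2 := integrable_rpow_neg_one_add_norm_sq (E := ℝ) (μ := volume) h1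
    have h3 : ∀ x : ℝ, ((1:ℝ) + ‖x‖ ^ 2) ^ (-(2*β)/2) = (1 + x ^ 2) ^ (-β) := by
      intro x
      rw [Real.norm_eq_abs, sq_abs]
      congr 1
      ring
    exact h2.congr (Filter.Eventually.of_forall h3)
  have ha_int : Integrable a :=
    ((hint_shape α (by linarith)).const_mul cα).congr
      (Filter.Eventually.of_forall fun x => (haw x).symm)
  have haγ_eq : ∀ x : ℝ, a x ^ γ = cα ^ γ * (1 + x ^ 2) ^ (-p) := by
    intro x
    rw [haw x, mul_rpow hcα.le (rpow_nonneg (ha_base x).le _), ← Real.rpow_mul (ha_base x).le]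
    congr 1
    rw [hp_def]; ring
  have haγ_int : Integrable (fun x => a x ^ γ) :=
    ((hint_shape p hp).const_mul (cα ^ γ)).congr
      (Filter.Eventually.of_forall fun x => (haγ_eq x).symm)
  have haγ_pos : ∀ x, 0 < a x ^ γ := fun x => rpow_pos_of_pos (ha_pos x) γ
  have ha_cont : Continuous a := by
    have h1 : Continuous fun x : ℝ => cα * (1 + x ^ 2) ^ (-α) :=
      continuous_const.mul ((continuous_const.add (continuous_pow 2)).rpow_const
        fun x => Or.inl (ha_base x).ne')
    exact h1.congr fun x => (haw x).symm
  have haγ_cont : Continuous fun x => a x ^ γ :=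
    ha_cont.rpow_const fun x => Or.inl (ha_pos x).ne'
  -- half-scale bound
  have hhalf : ∀ x z : ℝ, |x| / 2 ≤ |z| → a z ≤ 4 ^ α * a x := by
    intro x z h
    have h1 : a z ≤ a (x / 2) := ha_mono (x / 2) z (by rwa [abs_div, abs_two])
    have h2 : a (x / 2) ≤ 4 ^ α * a x := by
      rw [haw (x / 2), haw x]
      have h3 : (1 + x ^ 2) / 4 ≤ 1 + (x / 2) ^ 2 := by nlinarith [sq_nonneg x]
      have h4 : (1 + (x / 2) ^ 2) ^ (-α) ≤ ((1 + x ^ 2) / 4) ^ (-α) :=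
        rpow_le_rpow_of_nonpos (by positivity) h3 (by linarith)
      have h5 : ((1 + x ^ 2) / 4) ^ (-α) = 4 ^ α * (1 + x ^ 2) ^ (-α) := by
        rw [div_rpow (ha_base x).le (by norm_num : (0:ℝ) ≤ 4), Real.rpow_neg (by norm_num : (0:ℝ) ≤ 4)]
        field_simp
      calc cα * (1 + (x/2) ^ 2) ^ (-α) ≤ cα * (4 ^ α * (1 + x ^ 2) ^ (-α)) := by
            rw [← h5]; exact mul_le_mul_of_nonneg_left h4 hcα.le
        _ = 4 ^ α * (cα * (1 + x ^ 2) ^ (-α)) := by ring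
    linarith
  have hhalfγ : ∀ x z : ℝ, |x| / 2 ≤ |z| → a z ^ γ ≤ 4 ^ p * a x ^ γ := by
    intro x z h
    have h1 : a z ^ γ ≤ (4 ^ α * a x) ^ γ :=
      rpow_le_rpow (ha_pos z).le (hhalf x z h) hγ0.le
    have h2 : ((4:ℝ) ^ α * a x) ^ γ = 4 ^ p * a x ^ γ := by
      rw [mul_rpow (by positivity) (ha_pos x).le, ← Real.rpow_mul (by norm_num : (0:ℝ) ≤ 4)]
    rw [h2] at h1
    exact h1

  -- choices of constants
  set ε : ℝ := (δ / 4) / 4 ^ p with hε_def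
  have hε : 0 < ε := by positivity
  obtain ⟨R, hR0, hRtail⟩ := tail_small ha_int (fun x => (ha_pos x).le) hε
  set η : ℝ := (1 + δ / 2) ^ p⁻¹ - 1 with hη_def
  have hη0 : 0 < η := by
    have h1 : 1 < (1 + δ / 2) ^ p⁻¹ :=
      (one_lt_rpow_iff_of_pos (by linarith)).mpr (Or.inl ⟨by linarith, by positivity⟩)
    simp only [hη_def]; linarith
  have hηp : (1 + η) ^ p = 1 + δ / 2 := by
    have h1 : (1:ℝ) + η = (1 + δ / 2) ^ p⁻¹ := by simp [hη_def]
    rw [h1, ← Real.rpow_mul (by linarith : (0:ℝ) ≤ 1 + δ / 2),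
      inv_mul_cancel₀ hp0.ne', Real.rpow_one]
  set X : ℝ := max (4 * R) (4 * R / η) with hX_def
  have hX0 : 0 < X := lt_max_of_lt_left (by linarith)
  set κ : ℝ := (δ / 4) / (4 ^ α * cα ^ (1 - γ)) with hκ_def
  have hκ0 : 0 < κ := by positivity
  obtain ⟨T, hT0, hTtail⟩ := tail_small haγ_int (fun x => (haγ_pos x).le) (half_pos hκ0)
  set lam1 : ℝ := κ / 2 / (2 * T) with hlam1_def
  have hlam10 : 0 < lam1 := by positivity
  set lam : ℝ := min lam1 (a X ^ γ) with hlam_def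
  have hlam0 : 0 < lam := lt_min hlam10 (haγ_pos X)
  refine ⟨lam, hlam0, ?_⟩
  -- integrability of min functions
  have hmin_nonneg : ∀ z : ℝ, 0 ≤ min lam (a z ^ γ) := fun z =>
    le_min hlam0.le (haγ_pos z).le
  have hmin_cont : Continuous fun z => min lam (a z ^ γ) := continuous_const.min haγ_cont
  have hmin_int : Integrable (fun z => min lam (a z ^ γ)) := by
    refine haγ_int.mono' hmin_cont.aestronglyMeasurable (Filter.Eventually.of_forall fun z => ?_)
    rw [Real.norm_eq_abs, abs_of_nonneg (hmin_nonneg z)]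
    exact min_le_right _ _
  -- smallness of the integral of the min
  have hI : (∫ z : ℝ, min lam (a z ^ γ)) ≤ κ := by
    rw [← integral_add_compl (measurableSet_Icc : MeasurableSet (Icc (-T) T)) hmin_int]
    have h1 : (∫ z in Icc (-T) T, min lam (a z ^ γ)) ≤ ∫ z in Icc (-T) T, lam1 := by
      refine setIntegral_mono_on hmin_int.integrableOn ((integrableOn_const_iff).mpr ?_)
        measurableSet_Icc (fun z _ => (min_le_left _ _).trans (min_le_left _ _))
      right; rw [Real.volume_Icc]; exact ENNReal.ofReal_lt_top
    have h2 : (∫ z in Icc (-T) T, (lam1 : ℝ)) = κ / 2 := by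
      rw [setIntegral_const, Real.volume_real_Icc_of_le (by linarith), smul_eq_mul,
        hlam1_def]
      field_simp
      ring
    have h3 : (∫ z in (Icc (-T) T)ᶜ, min lam (a z ^ γ)) ≤ ∫ z in (Icc (-T) T)ᶜ, a z ^ γ := by
      refine setIntegral_mono_on hmin_int.integrableOn haγ_int.integrableOn
        measurableSet_Icc.compl (fun z _ => min_le_right _ _)
    linarith

  -- integrability of the convolution integrand
  have hconv_cont : ∀ x : ℝ, Continuous fun y => a y * min lam (a (x - y) ^ γ) := by
    intro x
    exact ha_cont.mul (hmin_cont.comp (continuous_const.sub continuous_id))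
  have hshift_int : ∀ x : ℝ, Integrable (fun y => min lam (a (x - y) ^ γ)) := by
    intro x
    exact (hmin_int.comp_sub_left x : _)
  have hfint : ∀ x : ℝ, Integrable (fun y => a y * min lam (a (x - y) ^ γ)) := by
    intro x
    refine (ha_int.const_mul lam).mono' (hconv_cont x).aestronglyMeasurable
      (Filter.Eventually.of_forall fun y => ?_)
    rw [Real.norm_eq_abs, abs_of_nonneg (mul_nonneg (ha_pos y).le (hmin_nonneg _))]
    calc a y * min lam (a (x - y) ^ γ) ≤ a y * lam :=
          mul_le_mul_of_nonneg_left (min_le_left _ _) (ha_pos y).le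
      _ = lam * a y := mul_comm _ _
  intro x
  rcases le_or_gt lam (a x ^ γ) with hcase | hcase
  · -- easy case : ω_λ(x) = lam
    rw [min_eq_left hcase]
    have h1 : (∫ y : ℝ, a y * min lam (a (x - y) ^ γ)) ≤ ∫ y : ℝ, lam * a y := by
      refine integral_mono (hfint x) (ha_int.const_mul lam) (fun y => ?_)
      calc a y * min lam (a (x - y) ^ γ) ≤ a y * lam :=
            mul_le_mul_of_nonneg_left (min_le_left _ _) (ha_pos y).le
        _ = lam * a y := mul_comm _ _
    rw [integral_const_mul, hnorm, mul_one] at h1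
    nlinarith
  · -- main case : ω_λ(x) = a(x)^γ  and |x| > X
    rw [min_eq_right hcase.le]
    have hxX : X < |x| := by
      by_contra hcon
      push_neg at hcon
      have h1 : a X ≤ a x := ha_mono x X (by rwa [abs_of_pos hX0])
      have h2 : a X ^ γ ≤ a x ^ γ := rpow_le_rpow (ha_pos X).le h1 hγ0.le
      have h3 : lam ≤ a X ^ γ := min_le_right _ _
      linarith
    have hx4R : 4 * R ≤ |x| := le_trans (le_max_left _ _) hxX.le
    have hx4Rη : 4 * R ≤ η * |x| := by
      have h1 : 4 * R / η ≤ |x| := le_trans (le_max_right _ _) hxX.le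
      calc 4 * R = η * (4 * R / η) := by field_simp
        _ ≤ η * |x| := mul_le_mul_of_nonneg_left h1 hη0.le
    -- near bound : for |y| ≤ R, a(x-y)^γ ≤ (1+δ/2) a(x)^γ
    have hnear : ∀ y : ℝ, |y| ≤ R → a (x - y) ^ γ ≤ (1 + δ / 2) * a x ^ γ := by
      intro y hy
      have hxy : (0:ℝ) ≤ |x| - R := by linarith
      have h1 : |x| - R ≤ |x - y| := by
        have := abs_sub_abs_le_abs_sub x y
        have h2 : |x| - |y| ≤ |x - y| := by linarith [abs_sub_abs_le_abs_sub x y]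
        linarith
      have h2 : (|x| - R) ^ 2 ≤ (x - y) ^ 2 := by
        rw [← sq_abs (x - y)]
        exact pow_le_pow_left₀ hxy h1 2
      have hkey : 1 + x ^ 2 ≤ (1 + η) * (1 + (x - y) ^ 2) := by
        have := key_ineq hR0 hη0 hx4R hx4Rη h2
        rwa [sq_abs x] at this
      have h3 : (0:ℝ) < (1 + x ^ 2) / (1 + η) := by positivity
      have h4 : (1 + (x - y) ^ 2) ^ (-p) ≤ ((1 + x ^ 2) / (1 + η)) ^ (-p) := by
        refine rpow_le_rpow_of_nonpos h3 ?_ (by linarith)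
        rw [div_le_iff₀ (by linarith)]
        calc 1 + x ^ 2 ≤ (1 + η) * (1 + (x - y) ^ 2) := hkey
          _ = (1 + (x - y) ^ 2) * (1 + η) := mul_comm _ _
      have h5 : ((1 + x ^ 2) / (1 + η)) ^ (-p) = (1 + η) ^ p * (1 + x ^ 2) ^ (-p) := by
        rw [div_rpow (ha_base x).le (by linarith : (0:ℝ) ≤ 1 + η),
          Real.rpow_neg (by linarith : (0:ℝ) ≤ 1 + η)]
        field_simp
      rw [haγ_eq (x - y), haγ_eq x]
      calc cα ^ γ * (1 + (x - y) ^ 2) ^ (-p)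
          ≤ cα ^ γ * ((1 + η) ^ p * (1 + x ^ 2) ^ (-p)) := by
            rw [← h5]
            exact mul_le_mul_of_nonneg_left h4 (rpow_nonneg hcα.le γ)
        _ = (1 + η) ^ p * (cα ^ γ * (1 + x ^ 2) ^ (-p)) := by ring
        _ = (1 + δ / 2) * (cα ^ γ * (1 + x ^ 2) ^ (-p)) := by rw [hηp]

    -- split the integral
    rw [← integral_add_compl (measurableSet_Icc : MeasurableSet (Icc (-R) R)) (hfint x)]
    have hA : (∫ y in Icc (-R) R, a y * min lam (a (x - y) ^ γ)) ≤ (1 + δ / 2) * a x ^ γ := by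
      have h1 : ∀ y ∈ Icc (-R) R, a y * min lam (a (x - y) ^ γ)
          ≤ ((1 + δ / 2) * a x ^ γ) * a y := by
        intro y hy
        have hyR : |y| ≤ R := abs_le.mpr ⟨hy.1, hy.2⟩
        calc a y * min lam (a (x - y) ^ γ) ≤ a y * ((1 + δ / 2) * a x ^ γ) :=
              mul_le_mul_of_nonneg_left ((min_le_right _ _).trans (hnear y hyR)) (ha_pos y).le
          _ = ((1 + δ / 2) * a x ^ γ) * a y := mul_comm _ _
      have h2 : (∫ y in Icc (-R) R, a y * min lam (a (x - y) ^ γ))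
          ≤ ∫ y in Icc (-R) R, ((1 + δ / 2) * a x ^ γ) * a y :=
        setIntegral_mono_on (hfint x).integrableOn (ha_int.const_mul _).integrableOn
          measurableSet_Icc h1
      have h4 : (∫ y in Icc (-R) R, a y) ≤ 1 := by
        rw [← hnorm]
        exact setIntegral_le_integral ha_int (Filter.Eventually.of_forall fun y => (ha_pos y).le)
      have h5 : (0:ℝ) ≤ (1 + δ / 2) * a x ^ γ :=
        mul_nonneg (by linarith) (haγ_pos x).le
      calc (∫ y in Icc (-R) R, a y * min lam (a (x - y) ^ γ))
          ≤ ((1 + δ / 2) * a x ^ γ) * ∫ y in Icc (-R) R, a y := by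
            rw [← integral_const_mul]; exact h2
        _ ≤ ((1 + δ / 2) * a x ^ γ) * 1 := mul_le_mul_of_nonneg_left h4 h5
        _ = (1 + δ / 2) * a x ^ γ := mul_one _
    have hB : (∫ y in (Icc (-R) R)ᶜ, a y * min lam (a (x - y) ^ γ))
        ≤ δ / 4 * a x ^ γ + δ / 4 * a x ^ γ := by
      set c1 : ℝ := 4 ^ p * a x ^ γ with hc1
      set c2 : ℝ := 4 ^ α * a x with hc2
      have hc10 : (0:ℝ) ≤ c1 :=
        mul_nonneg (rpow_pos_of_pos (by norm_num) p).le (haγ_pos x).le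
      have hc20 : (0:ℝ) ≤ c2 :=
        mul_nonneg (rpow_pos_of_pos (by norm_num) α).le (ha_pos x).le
      have hg_int : Integrable (fun y => a y * c1 + c2 * min lam (a (x - y) ^ γ)) :=
        (ha_int.mul_const c1).add ((hshift_int x).const_mul c2)
      have hfg : ∀ y ∈ (Icc (-R) R)ᶜ, a y * min lam (a (x - y) ^ γ)
          ≤ a y * c1 + c2 * min lam (a (x - y) ^ γ) := by
        intro y _
        rcases le_or_gt |y| (|x| / 2) with hy2 | hy2
        · have hxy : |x| / 2 ≤ |x - y| := by
            have := abs_sub_abs_le_abs_sub x y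
            linarith
          have h1 : min lam (a (x - y) ^ γ) ≤ c1 :=
            (min_le_right _ _).trans (hhalfγ x (x - y) hxy)
          have h2 : a y * min lam (a (x - y) ^ γ) ≤ a y * c1 :=
            mul_le_mul_of_nonneg_left h1 (ha_pos y).le
          have h3 : 0 ≤ c2 * min lam (a (x - y) ^ γ) := mul_nonneg hc20 (hmin_nonneg _)
          linarith
        · have h1 : a y ≤ c2 := hhalf x y hy2.le
          have h2 : a y * min lam (a (x - y) ^ γ) ≤ c2 * min lam (a (x - y) ^ γ) :=
            mul_le_mul_of_nonneg_right h1 (hmin_nonneg _)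
          have h3 : 0 ≤ a y * c1 := mul_nonneg (ha_pos y).le hc10
          linarith
      have hsplit : (∫ y in (Icc (-R) R)ᶜ, a y * min lam (a (x - y) ^ γ))
          ≤ ∫ y in (Icc (-R) R)ᶜ, (a y * c1 + c2 * min lam (a (x - y) ^ γ)) :=
        setIntegral_mono_on (hfint x).integrableOn hg_int.integrableOn
          measurableSet_Icc.compl hfg
      have hadd : (∫ y in (Icc (-R) R)ᶜ, (a y * c1 + c2 * min lam (a (x - y) ^ γ)))
          = (∫ y in (Icc (-R) R)ᶜ, a y * c1)
            + ∫ y in (Icc (-R) R)ᶜ, c2 * min lam (a (x - y) ^ γ) :=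
        integral_add (ha_int.mul_const c1).integrableOn
          ((hshift_int x).const_mul c2).integrableOn
      have hB1 : (∫ y in (Icc (-R) R)ᶜ, a y * c1) ≤ δ / 4 * a x ^ γ := by
        rw [integral_mul_const]
        have n1 : (0:ℝ) < (4:ℝ) ^ p := rpow_pos_of_pos (by norm_num) p
        calc (∫ y in (Icc (-R) R)ᶜ, a y) * c1 ≤ ε * c1 :=
              mul_le_mul_of_nonneg_right hRtail hc10
          _ = δ / 4 * a x ^ γ := by
              rw [hε_def, hc1]
              exact cancel_aux n1.ne'
      have hB2 : (∫ y in (Icc (-R) R)ᶜ, c2 * min lam (a (x - y) ^ γ)) ≤ δ / 4 * a x ^ γ := by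
        rw [integral_const_mul]
        have h1 : (∫ y in (Icc (-R) R)ᶜ, min lam (a (x - y) ^ γ))
            ≤ ∫ y : ℝ, min lam (a (x - y) ^ γ) :=
          setIntegral_le_integral (hshift_int x)
            (Filter.Eventually.of_forall fun y => hmin_nonneg _)
        have h2 : (∫ y : ℝ, min lam (a (x - y) ^ γ)) = ∫ z : ℝ, min lam (a z ^ γ) :=
          integral_sub_left_eq_self (fun z => min lam (a z ^ γ)) volume x
        have h3 : (∫ y in (Icc (-R) R)ᶜ, min lam (a (x - y) ^ γ)) ≤ κ := by
          rw [h2] at h1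
          linarith
        have h4 : a x ^ (1 - γ) * a x ^ γ = a x := by
          rw [← Real.rpow_add (ha_pos x)]
          norm_num
        have h5 : a x ^ (1 - γ) ≤ cα ^ (1 - γ) :=
          rpow_le_rpow (ha_pos x).le (ha_le_cα x) (by linarith)
        have h6 : 4 ^ α * cα ^ (1 - γ) * κ = δ / 4 := by
          have n1 : ((4:ℝ) ^ α) ≠ 0 := (rpow_pos_of_pos (by norm_num) α).ne'
          have n2 : (cα ^ (1 - γ)) ≠ 0 := (rpow_pos_of_pos hcα _).ne'
          rw [hκ_def]
          exact cancel_aux2 n1 n2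
        calc c2 * (∫ y in (Icc (-R) R)ᶜ, min lam (a (x - y) ^ γ)) ≤ c2 * κ :=
              mul_le_mul_of_nonneg_left h3 hc20
          _ = 4 ^ α * (a x ^ (1 - γ) * a x ^ γ) * κ := by rw [hc2, h4]
          _ ≤ 4 ^ α * (cα ^ (1 - γ) * a x ^ γ) * κ := by
              have h7 : a x ^ (1 - γ) * a x ^ γ ≤ cα ^ (1 - γ) * a x ^ γ :=
                mul_le_mul_of_nonneg_right h5 (haγ_pos x).le
              have h8 : (0:ℝ) ≤ (4:ℝ) ^ α := (rpow_pos_of_pos (by norm_num) α).le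
              exact mul_le_mul_of_nonneg_right (mul_le_mul_of_nonneg_left h7 h8) hκ0.le
          _ = (4 ^ α * cα ^ (1 - γ) * κ) * a x ^ γ := by ring
          _ = δ / 4 * a x ^ γ := by rw [h6]
      calc (∫ y in (Icc (-R) R)ᶜ, a y * min lam (a (x - y) ^ γ))
          ≤ (∫ y in (Icc (-R) R)ᶜ, a y * c1)
            + ∫ y in (Icc (-R) R)ᶜ, c2 * min lam (a (x - y) ^ γ) := by
            rw [← hadd]; exact hsplit
        _ ≤ δ / 4 * a x ^ γ + δ / 4 * a x ^ γ := add_le_add hB1 hB2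
    linarith
end
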